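/- In the abstract Picard–Fuchs setting, suppose in addition that E^a : ℂ^N → ℂ (a ∈ Fin N) are ℂ-differentiable functions on U with ∂_hΨ(t,h) = h^{−1}·Σ_a E^a(t)·∂_aΨ(t,h) for all t ∈ U and h ∈ V, and assume that for every t ∈ U the 3N functions on V given by h ↦ h^{−1}·∂_cΨ(t,h), h ↦ h^{−2}·∂_cΨ(t,h), and h ↦ h^{−3}·∂_cΨ(t,h) (c ∈ Fin N) are linearly independent over ℂ. Then everywhere on U: (i) ∂_a∂_b E^c = 0 for all a, b, c (the vector field E = Σ_a E^a ∂_a is affine in the coordinates t); and (ii) for all a, b, c: Σ_e E^e·(∂_e A^c_{ab}) + Σ_e (∂_a E^e)·A^c_{eb} + Σ_e (∂_b E^e)·A^c_{ae} − Σ_e A^e_{ab}·(∂_e E^c) = −A^c_{ab}; that is, E acts as a conformal symmetry of the multiplication ∂_a ∘ ∂_b := Σ_c A^c_{ab}·∂_c. -/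

import Mathlib

open Complex

/-- Partial derivative `∂_aΨ(t,h)` of `Ψ : ℂ^N × ℂ → ℂ^M` in the `a`-th coordinate
direction of `ℂ^N`. -/
noncomputable def pdt {N M : ℕ} (Ψ : (Fin N → ℂ) → ℂ → (Fin M → ℂ)) (a : Fin N)
    (t : Fin N → ℂ) (h : ℂ) : Fin M → ℂ :=
  deriv (fun z : ℂ => Ψ (Function.update t a z) h) (t a)

/-- Partial derivative `∂_hΨ(t,h)` in the `ℂ`-direction. -/
noncomputable def pdh {N M : ℕ} (Ψ : (Fin N → ℂ) → ℂ → (Fin M → ℂ))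
    (t : Fin N → ℂ) (h : ℂ) : Fin M → ℂ :=
  deriv (Ψ t) h

/-- Partial derivative `∂_aφ(t)` of a scalar function `φ : ℂ^N → ℂ` in the `a`-th
coordinate direction. -/
noncomputable def pdS {N : ℕ} (a : Fin N) (φ : (Fin N → ℂ) → ℂ) (t : Fin N → ℂ) : ℂ :=
  deriv (fun z : ℂ => φ (Function.update t a z)) (t a)

namespace PFAux

variable {N M : ℕ}

lemma update_hasDerivAt (t : Fin N → ℂ) (a : Fin N) (z : ℂ) :
    HasDerivAt (fun w : ℂ => Function.update t a w) (Pi.single a 1) z := by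
  rw [hasDerivAt_pi]
  intro i
  rcases eq_or_ne i a with rfl | hi
  · simpa using (hasDerivAt_id' z)
  · simpa [Function.update_apply, hi, Pi.single_apply] using (hasDerivAt_const z (t i))

lemma pdS_eq {φ : (Fin N → ℂ) → ℂ} {t : Fin N → ℂ} (hφ : DifferentiableAt ℂ φ t) (a : Fin N) :
    pdS a φ t = fderiv ℂ φ t (Pi.single a 1) := by
  have h1 : HasDerivAt (fun z : ℂ => φ (Function.update t a z))
      (fderiv ℂ φ t (Pi.single a 1)) (t a) := by
    have hc : HasDerivAt (fun z : ℂ => Function.update t a z) (Pi.single a 1) (t a) :=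
      update_hasDerivAt t a (t a)
    have hφ' : HasFDerivAt φ (fderiv ℂ φ t) (Function.update t a (t a)) := by
      rw [Function.update_eq_self]; exact hφ.hasFDerivAt
    exact hφ'.comp_hasDerivAt (t a) hc
  exact h1.deriv

lemma pdt_eq {Ψ : (Fin N → ℂ) → ℂ → (Fin M → ℂ)} {t : Fin N → ℂ} {h : ℂ}
    (hΨ : DifferentiableAt ℂ (fun p : (Fin N → ℂ) × ℂ => Ψ p.1 p.2) (t, h)) (a : Fin N) :
    pdt Ψ a t h = fderiv ℂ (fun p : (Fin N → ℂ) × ℂ => Ψ p.1 p.2) (t, h) (Pi.single a 1, 0) := by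
  have hcur : HasDerivAt (fun z : ℂ => (Function.update t a z, h))
      ((Pi.single a 1 : Fin N → ℂ), (0 : ℂ)) (t a) :=
    (update_hasDerivAt t a (t a)).prodMk (hasDerivAt_const (t a) h)
  have hΨ' : HasFDerivAt (fun p : (Fin N → ℂ) × ℂ => Ψ p.1 p.2)
      (fderiv ℂ (fun p : (Fin N → ℂ) × ℂ => Ψ p.1 p.2) (t, h)) (Function.update t a (t a), h) := by
    rw [Function.update_eq_self]; exact hΨ.hasFDerivAt
  exact (hΨ'.comp_hasDerivAt (t a) hcur).deriv

lemma pdh_eq {Ψ : (Fin N → ℂ) → ℂ → (Fin M → ℂ)} {t : Fin N → ℂ} {h : ℂ}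
    (hΨ : DifferentiableAt ℂ (fun p : (Fin N → ℂ) × ℂ => Ψ p.1 p.2) (t, h)) :
    pdh Ψ t h = fderiv ℂ (fun p : (Fin N → ℂ) × ℂ => Ψ p.1 p.2) (t, h) (0, 1) := by
  have hcur : HasDerivAt (fun z : ℂ => (t, z)) ((0 : Fin N → ℂ), (1 : ℂ)) h :=
    (hasDerivAt_const h t).prodMk (hasDerivAt_id h)
  exact (hΨ.hasFDerivAt.comp_hasDerivAt h hcur).deriv

section dirD

variable {X Y : Type*} [NormedAddCommGroup X] [NormedSpace ℂ X]
  [NormedAddCommGroup Y] [NormedSpace ℂ Y] {s : Set X} {g : X → Y}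

lemma dirD_contDiffOn (hg : ContDiffOn ℂ ⊤ g s) (hs : IsOpen s) (v : X) :
    ContDiffOn ℂ ⊤ (fun p => fderiv ℂ g p v) s := by
  have h1 : ContDiffOn ℂ ⊤ (fderiv ℂ g) s := hg.fderiv_of_isOpen hs (by simp)
  exact h1.clm_apply contDiffOn_const

lemma fderiv_diffOn (hg : ContDiffOn ℂ ⊤ g s) (hs : IsOpen s) {p : X} (hp : p ∈ s) :
    DifferentiableAt ℂ (fderiv ℂ g) p := by
  have h1 : ContDiffOn ℂ ⊤ (fderiv ℂ g) s := hg.fderiv_of_isOpen hs (by simp)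
  exact (h1.contDiffAt (hs.mem_nhds hp)).differentiableAt (by simp)

lemma dirD_comm (hg : ContDiffOn ℂ ⊤ g s) (hs : IsOpen s) {p : X} (hp : p ∈ s) (v w : X) :
    fderiv ℂ (fun q => fderiv ℂ g q w) p v = fderiv ℂ (fun q => fderiv ℂ g q v) p w := by
  have hd : DifferentiableAt ℂ (fderiv ℂ g) p := fderiv_diffOn hg hs hp
  have hsymm : IsSymmSndFDerivAt ℂ g p :=
    (hg.contDiffAt (hs.mem_nhds hp)).isSymmSndFDerivAt (by simp)
  have e1 : ∀ u : X, fderiv ℂ (fun q => fderiv ℂ g q u) p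
      = (fderiv ℂ (fderiv ℂ g) p).flip u := by
    intro u
    have := fderiv_clm_apply (c := fderiv ℂ g) (u := fun _ => u) hd (differentiableAt_const u)
    simpa using this
  rw [e1 w, e1 v]
  simpa using hsymm v w

end dirD

end PFAux

namespace PFAux2

variable {E F : Type*} [NormedAddCommGroup E] [NormedSpace ℂ E]
  [NormedAddCommGroup F] [NormedSpace ℂ F] {ι : Type*} [Fintype ι]

lemma fst_comp_diff {φ : E → ℂ} {p : E × ℂ} (hφ : DifferentiableAt ℂ φ p.1) :
    DifferentiableAt ℂ (fun q : E × ℂ => φ q.1) p :=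
  hφ.comp p differentiableAt_fst

lemma fst_dirD {φ : E → ℂ} {p : E × ℂ} (hφ : DifferentiableAt ℂ φ p.1) (v : E × ℂ) :
    fderiv ℂ (fun q : E × ℂ => φ q.1) p v = fderiv ℂ φ p.1 v.1 := by
  have h1 : HasFDerivAt (fun q : E × ℂ => φ q.1)
      ((fderiv ℂ φ p.1).comp (ContinuousLinearMap.fst ℂ E ℂ)) p :=
    hφ.hasFDerivAt.comp p hasFDerivAt_fst
  rw [h1.fderiv]; rfl

lemma comp_hasF {φ : ℂ → ℂ} {φ' : ℂ} {f : ι → E × ℂ → ℂ} {g : ι → E × ℂ → F} {p : E × ℂ}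
    (hφ : HasDerivAt φ φ' p.2) (hf : ∀ c, DifferentiableAt ℂ (f c) p)
    (hg : ∀ c, DifferentiableAt ℂ (g c) p) :
    HasFDerivAt (fun q : E × ℂ => φ q.2 • ∑ c, f c q • g c q)
      (φ p.2 • (∑ c, (f c p • fderiv ℂ (g c) p +
          (fderiv ℂ (f c) p).smulRight (g c p))) +
        (φ' • ContinuousLinearMap.snd ℂ E ℂ).smulRight (∑ c, f c p • g c p)) p := by
  have hΦ : HasFDerivAt (fun q : E × ℂ => ∑ c, f c q • g c q)
      (∑ c, (f c p • fderiv ℂ (g c) p + (fderiv ℂ (f c) p).smulRight (g c p))) p := by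
    refine HasFDerivAt.fun_sum fun c _ => ?_
    exact (hf c).hasFDerivAt.smul (hg c).hasFDerivAt
  have hH : HasFDerivAt (fun q : E × ℂ => φ q.2) (φ' • ContinuousLinearMap.snd ℂ E ℂ) p :=
    hφ.comp_hasFDerivAt p hasFDerivAt_snd
  exact hH.smul hΦ

lemma comp_diff {φ : ℂ → ℂ} {φ' : ℂ} {f : ι → E × ℂ → ℂ} {g : ι → E × ℂ → F} {p : E × ℂ}
    (hφ : HasDerivAt φ φ' p.2) (hf : ∀ c, DifferentiableAt ℂ (f c) p)
    (hg : ∀ c, DifferentiableAt ℂ (g c) p) :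
    DifferentiableAt ℂ (fun q : E × ℂ => φ q.2 • ∑ c, f c q • g c q) p :=
  (comp_hasF hφ hf hg).differentiableAt

lemma comp_dirD {φ : ℂ → ℂ} {φ' : ℂ} {f : ι → E × ℂ → ℂ} {g : ι → E × ℂ → F} {p : E × ℂ}
    (hφ : HasDerivAt φ φ' p.2) (hf : ∀ c, DifferentiableAt ℂ (f c) p)
    (hg : ∀ c, DifferentiableAt ℂ (g c) p) (v : E × ℂ) :
    fderiv ℂ (fun q : E × ℂ => φ q.2 • ∑ c, f c q • g c q) p v =
      (φ' * v.2) • ∑ c, f c p • g c p +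
        φ p.2 • ∑ c, (fderiv ℂ (f c) p v • g c p + f c p • fderiv ℂ (g c) p v) := by
  rw [(comp_hasF hφ hf hg).fderiv]
  simp [ContinuousLinearMap.sum_apply, Finset.smul_sum, mul_smul, add_comm, smul_add]

lemma swap_smul (κ : ℂ) (f : ι → ℂ) (w : ι → F) :
    κ • ∑ c, f c • w c = ∑ c, f c • (κ • w c) := by
  rw [Finset.smul_sum]
  exact Finset.sum_congr rfl fun c _ => smul_comm κ (f c) (w c)

lemma nest (κ₁ κ₂ : ℂ) (f : ι → ℂ) (g : ι → ι → ℂ) (w : ι → F) :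
    κ₁ • ∑ c, f c • (κ₂ • ∑ d, g c d • w d) =
      ∑ d, (∑ c, f c * g c d) • ((κ₁ * κ₂) • w d) := by
  simp only [Finset.smul_sum, smul_smul, Finset.sum_smul]
  rw [Finset.sum_comm]
  refine Finset.sum_congr rfl fun d _ => ?_
  rw [Finset.sum_mul, Finset.sum_smul]
  refine Finset.sum_congr rfl fun c _ => ?_
  congr 1
  ring

end PFAux2

namespace PFAux3

lemma exists_eval_matrix {ι β : Type*} [Fintype ι] [DecidableEq ι] (w : ι → β → ℂ)
    (hw : LinearIndependent ℂ w) :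
    ∃ b : ι → β, IsUnit (Matrix.of fun i j => w j (b i)).det := by
  classical
  set col : β → (ι → ℂ) := fun s i => w i s with hcol
  have hspan : Submodule.span ℂ (Set.range col) = ⊤ := by
    by_contra hne
    obtain ⟨f, hf0, hfker⟩ :=
      Submodule.exists_le_ker_of_lt_top _ (lt_top_iff_ne_top.mpr hne)
    have hlam : ∀ i, f (fun j => if i = j then (1:ℂ) else 0) = 0 := by
      have hz : ∀ s : β, f (col s) = 0 := fun s =>
        hfker (Submodule.subset_span (Set.mem_range_self s))
    -- show the coefficients vanish using linear independence
      have hli := Fintype.linearIndependent_iff.mp hw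
        (fun i => f (fun j => if i = j then (1:ℂ) else 0))
      apply hli
      ext s
      have h1 := LinearMap.pi_apply_eq_sum_univ f (col s)
      rw [hz s] at h1
      have h2 : ∑ i, (f fun j => if i = j then (1:ℂ) else 0) • w i s
          = ∑ i, col s i • f fun j => if i = j then (1:ℂ) else 0 := by
        refine Finset.sum_congr rfl fun i _ => ?_
        simp [hcol, smul_eq_mul, mul_comm]
      have h3 : ∑ i, (f fun j => if i = j then (1:ℂ) else 0) • w i s = 0 := by
        rw [h2]; exact h1.symm
      simpa [Finset.sum_apply] using h3
    apply hf0
    apply LinearMap.ext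
    intro x
    rw [LinearMap.pi_apply_eq_sum_univ f x]
    simp only [LinearMap.zero_apply]
    exact Finset.sum_eq_zero fun i _ => by rw [hlam i, smul_zero]
  obtain ⟨bset, hbsub, hbspan, hbli⟩ := exists_linearIndependent ℂ (Set.range col)
  rw [hspan] at hbspan
  have hfin : bset.Finite := hbli.setFinite
  haveI : Fintype ↥bset := hfin.fintype
  let B : Module.Basis ↥bset ℂ (ι → ℂ) := Module.Basis.mk hbli (by rw [Subtype.range_coe]; exact hbspan.ge)
  have hcard : Fintype.card ι = Fintype.card ↥bset := by
    rw [← Module.finrank_eq_card_basis B, Module.finrank_pi]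
  let e : ι ≃ ↥bset := Fintype.equivOfCardEq hcard
  let Bι : Module.Basis ι ℂ (ι → ℂ) := B.reindex e.symm
  have hBι : ∀ j : ι, (Bι j : ι → ℂ) ∈ Set.range col := by
    intro j
    have : Bι j = B (e j) := by simp [Bι, Module.Basis.reindex_apply]
    rw [this, Module.Basis.mk_apply]
    exact hbsub (e j).2
  choose b hb using fun j => hBι j
  refine ⟨b, ?_⟩
  haveI := Module.Basis.invertibleToMatrix (Pi.basisFun ℂ ι) Bι
  have hunit : IsUnit ((Pi.basisFun ℂ ι).toMatrix ⇑Bι).det :=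
    Matrix.isUnit_det_of_invertible _
  have hmat : (Matrix.of fun i j => w j (b i)) = Matrix.transpose ((Pi.basisFun ℂ ι).toMatrix ⇑Bι) := by
    ext i j
    have : (Pi.basisFun ℂ ι).toMatrix ⇑Bι j i = Bι i j := by
      rw [Module.Basis.toMatrix_apply, Pi.basisFun_repr]
    simp only [Matrix.transpose_apply, this, Matrix.of_apply]
    rw [← hb i]
  rw [hmat, Matrix.det_transpose]
  exact hunit

end PFAux3

namespace PFAux4

variable {E : Type*} [NormedAddCommGroup E] [NormedSpace ℂ E]
  {ι : Type*} [Fintype ι] [DecidableEq ι]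

lemma det_diff {f : E → Matrix ι ι ℂ} {x : E}
    (hf : ∀ i j, DifferentiableAt ℂ (fun t => f t i j) x) :
    DifferentiableAt ℂ (fun t => (f t).det) x := by
  have hrw : (fun t => (f t).det)
      = fun t => ∑ σ : Equiv.Perm ι, Equiv.Perm.sign σ • ∏ i, f t (σ i) i :=
    funext fun t => Matrix.det_apply _
  rw [hrw]
  refine DifferentiableAt.fun_sum fun σ _ => ?_
  have h2 : (fun t => Equiv.Perm.sign σ • ∏ i, f t (σ i) i)
      = fun t => ((Equiv.Perm.sign σ : ℤ) : ℂ) * ∏ i, f t (σ i) i :=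
    funext fun t => by rw [Units.smul_def, zsmul_eq_mul]
  rw [h2]
  exact ((HasFDerivAt.finset_prod fun i _ =>
    (hf (σ i) i).hasFDerivAt).differentiableAt).const_mul _

lemma solve_diff {B : E → Matrix ι ι ℂ} {q u : E → ι → ℂ} {x₀ : E}
    (hBd : ∀ i j, DifferentiableAt ℂ (fun t => B t i j) x₀)
    (hqd : ∀ i, DifferentiableAt ℂ (fun t => q t i) x₀)
    (hdet : ContinuousAt (fun t => (B t).det) x₀)
    (hdet0 : (B x₀).det ≠ 0)
    (heq : ∀ᶠ t in nhds x₀, (B t).mulVec (u t) = q t)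
    (k : ι) : DifferentiableAt ℂ (fun t => u t k) x₀ := by
  classical
  set g : E → ℂ := fun t => ((B t).det)⁻¹ * ((Matrix.adjugate (B t)).mulVec (q t) k) with hg
  have hne : ∀ᶠ t in nhds x₀, (B t).det ≠ 0 := hdet.eventually_ne hdet0
  have hu : (fun t => u t k) =ᶠ[nhds x₀] g := by
    filter_upwards [heq, hne] with t ht hd
    have h1 : (Matrix.adjugate (B t)).mulVec (q t) = (B t).det • u t := by
      rw [← ht, Matrix.mulVec_mulVec, Matrix.adjugate_mul, Matrix.smul_mulVec,
        Matrix.one_mulVec]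
    simp only [hg, h1, Pi.smul_apply, smul_eq_mul]
    field_simp
  have hgd : DifferentiableAt ℂ g x₀ := by
    have hdetd : DifferentiableAt ℂ (fun t => (B t).det) x₀ := det_diff hBd
    have hadj : ∀ i j, DifferentiableAt ℂ (fun t => Matrix.adjugate (B t) i j) x₀ := by
      intro i j
      have hrw : (fun t => Matrix.adjugate (B t) i j)
          = fun t => ((B t).updateRow j (Pi.single i 1)).det :=
        funext fun t => Matrix.adjugate_apply _ _ _
      rw [hrw]
      refine det_diff fun i' j' => ?_
      rcases eq_or_ne i' j with rfl | hij
      · simp only [Matrix.updateRow_apply, if_pos rfl]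
        exact differentiableAt_const _
      · simpa [Matrix.updateRow_apply, hij] using hBd i' j'
    refine DifferentiableAt.mul (hdetd.inv hdet0) ?_
    have : (fun t => (Matrix.adjugate (B t)).mulVec (q t) k)
        = fun t => ∑ j, Matrix.adjugate (B t) k j * q t j := by
      funext t; rfl
    rw [this]
    exact DifferentiableAt.fun_sum fun j _ => (hadj k j).mul (hqd j)
  exact hu.differentiableAt_iff.mpr hgd

end PFAux4

/-- The Euler vector field `E = Σ_a E^a ∂_a` obtained from `∂_hΨ = h⁻¹ Σ_a E^a ∂_aΨ`
is affine in the flat coordinates and acts as a conformal symmetry of the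
multiplication `∂_a ∘ ∂_b = Σ_c A^c_{ab} ∂_c`. -/
theorem picardFuchs_euler_conformal_symmetry
    (N M : ℕ) (hN : 0 < N) (hM : 0 < M)
    (U : Set (Fin N → ℂ)) (hU : IsOpen U) (hUne : U.Nonempty)
    (V : Set ℂ) (hV : IsOpen V) (hVne : V.Nonempty) (hV0 : (0 : ℂ) ∉ V)
    (Ψ : (Fin N → ℂ) → ℂ → (Fin M → ℂ))
    (hΨ : ContDiffOn ℂ ⊤ (fun p : (Fin N → ℂ) × ℂ => Ψ p.1 p.2) (U ×ˢ V))
    (A : Fin N → Fin N → Fin N → (Fin N → ℂ) → ℂ)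
    (hA : ∀ c a b, DifferentiableOn ℂ (A c a b) U)
    (hPF : ∀ a b : Fin N, ∀ t ∈ U, ∀ h ∈ V,
      pdt (fun t' h' => pdt Ψ b t' h') a t h = h⁻¹ • ∑ c, A c a b t • pdt Ψ c t h)
    (E : Fin N → (Fin N → ℂ) → ℂ)
    (hE : ∀ a, DifferentiableOn ℂ (E a) U)
    (hEuler : ∀ t ∈ U, ∀ h ∈ V, pdh Ψ t h = h⁻¹ • ∑ a, E a t • pdt Ψ a t h)
    (hLI : ∀ t ∈ U, ∀ c d e : Fin N → ℂ,
      (∀ h ∈ V,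
        (∑ a, c a • (h⁻¹ • pdt Ψ a t h)) + (∑ a, d a • ((h⁻¹) ^ 2 • pdt Ψ a t h)) +
          (∑ a, e a • ((h⁻¹) ^ 3 • pdt Ψ a t h)) = 0) →
      (∀ a, c a = 0) ∧ (∀ a, d a = 0) ∧ (∀ a, e a = 0)) :
    ∀ t ∈ U,
      (∀ a b c, pdS a (fun s => pdS b (E c) s) t = 0) ∧
      (∀ a b c,
        (∑ e', E e' t * pdS e' (A c a b) t) + (∑ e', pdS a (E e') t * A c e' b t) +
            (∑ e', pdS b (E e') t * A c a e' t) - (∑ e', A e' a b t * pdS e' (E c) t) =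
          -(A c a b t)) := by
  classical
  -- ambient setup
  set F : (Fin N → ℂ) × ℂ → (Fin M → ℂ) := fun p => Ψ p.1 p.2 with hFdef
  set s : Set ((Fin N → ℂ) × ℂ) := U ×ˢ V with hsdef
  have hs : IsOpen s := hU.prod hV
  have hF : ContDiffOn ℂ ⊤ F s := hΨ
  have hFd : ∀ {p : (Fin N → ℂ) × ℂ}, p ∈ s → DifferentiableAt ℂ F p := fun {p} hp =>
    (hF.contDiffAt (hs.mem_nhds hp)).differentiableAt (by simp)
  set G : Fin N → ((Fin N → ℂ) × ℂ) → (Fin M → ℂ) :=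
    fun a p => fderiv ℂ F p (Pi.single a 1, 0) with hGdef
  set Gh : ((Fin N → ℂ) × ℂ) → (Fin M → ℂ) := fun p => fderiv ℂ F p (0, 1) with hGhdef
  set P : Fin N → ((Fin N → ℂ) × ℂ) → (Fin M → ℂ) :=
    fun a p => fderiv ℂ (G a) p (0, 1) with hPdef
  have hGsm : ∀ a, ContDiffOn ℂ ⊤ (G a) s := fun a => PFAux.dirD_contDiffOn hF hs _
  have hGhsm : ContDiffOn ℂ ⊤ Gh s := PFAux.dirD_contDiffOn hF hs _
  have hGd : ∀ (a) {p : (Fin N → ℂ) × ℂ}, p ∈ s → DifferentiableAt ℂ (G a) p := fun a {p} hp =>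
    ((hGsm a).contDiffAt (hs.mem_nhds hp)).differentiableAt (by simp)
  have hGhd : ∀ {p : (Fin N → ℂ) × ℂ}, p ∈ s → DifferentiableAt ℂ Gh p := fun {p} hp =>
    (hGhsm.contDiffAt (hs.mem_nhds hp)).differentiableAt (by simp)
  have hPsm : ∀ a, ContDiffOn ℂ ⊤ (P a) s := fun a => PFAux.dirD_contDiffOn (hGsm a) hs _
  have hPd : ∀ (a) {p : (Fin N → ℂ) × ℂ}, p ∈ s → DifferentiableAt ℂ (P a) p := fun a {p} hp =>
    ((hPsm a).contDiffAt (hs.mem_nhds hp)).differentiableAt (by simp)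
  -- bridges
  have hpdt : ∀ (a : Fin N) {t h}, (t, h) ∈ s → pdt Ψ a t h = G a (t, h) := by
    intro a t h hp
    exact PFAux.pdt_eq (hFd hp) a
  have hpdh : ∀ {t h}, (t, h) ∈ s → pdh Ψ t h = Gh (t, h) := by
    intro t h hp
    exact PFAux.pdh_eq (hFd hp)
  -- differentiability of data
  have hEd : ∀ (c) {t}, t ∈ U → DifferentiableAt ℂ (E c) t := fun c {t} ht =>
    (hE c).differentiableAt (hU.mem_nhds ht)
  have hAd : ∀ (c a b) {t}, t ∈ U → DifferentiableAt ℂ (A c a b) t := fun c a b {t} ht =>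
    (hA c a b).differentiableAt (hU.mem_nhds ht)
  -- PF system in fderiv form
  have hPF' : ∀ (a b : Fin N), ∀ p ∈ s,
      fderiv ℂ (G b) p (Pi.single a 1, (0:ℂ)) = (p.2)⁻¹ • ∑ c, A c a b p.1 • G c p := by
    rintro a b ⟨t, h⟩ hp
    have ht : t ∈ U := hp.1
    have hh : h ∈ V := hp.2
    have hupd : Continuous (fun z : ℂ => Function.update t a z) := by
      apply continuous_pi
      intro i
      rcases eq_or_ne i a with rfl | hi
      · simpa [Function.update_apply] using continuous_id'
      · simpa [Function.update_apply, hi] using continuous_const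
    have hopen : IsOpen {z : ℂ | (Function.update t a z, h) ∈ s} :=
      hs.preimage (hupd.prodMk continuous_const)
    have hmem0 : t a ∈ {z : ℂ | (Function.update t a z, h) ∈ s} := by
      simp only [Set.mem_setOf_eq, Function.update_eq_self]
      exact hp
    have hEV : (fun z : ℂ => pdt Ψ b (Function.update t a z) h)
        =ᶠ[nhds (t a)] (fun z : ℂ => G b (Function.update t a z, h)) := by
      filter_upwards [hopen.mem_nhds hmem0] with z hz
      exact hpdt b hz
    have hdGb : DifferentiableAt ℂ (fun p : (Fin N → ℂ) × ℂ =>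
        (fun t' h' => G b (t', h')) p.1 p.2) (t, h) := hGd b hp
    have hL : pdt (fun t' h' => pdt Ψ b t' h') a t h
        = fderiv ℂ (G b) (t, h) (Pi.single a 1, (0:ℂ)) := by
      have h1 : pdt (fun t' h' => pdt Ψ b t' h') a t h
          = deriv (fun z => G b (Function.update t a z, h)) (t a) := hEV.deriv_eq
      have h2 := PFAux.pdt_eq (Ψ := fun t' h' => G b (t', h')) hdGb a
      exact h1.trans h2
    rw [← hL, hPF a b t ht h hh]
    show h⁻¹ • _ = h⁻¹ • _
    congr 1
    exact Finset.sum_congr rfl fun c _ => by rw [hpdt c hp]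
  -- Euler equation in fderiv form
  have hEU' : ∀ p ∈ s, Gh p = (p.2)⁻¹ • ∑ c, E c p.1 • G c p := by
    rintro ⟨t, h⟩ hp
    rw [← hpdh hp, hEuler t hp.1 h hp.2]
    show h⁻¹ • _ = h⁻¹ • _
    congr 1
    exact Finset.sum_congr rfl fun c _ => by rw [hpdt c hp]
  -- linear independence, normalized
  have hKey : ∀ t ∈ U, ∀ x y z x' y' z' : Fin N → ℂ,
      (∀ h ∈ V,
        (∑ c, x c • ((h:ℂ)⁻¹ • G c (t, h))) + (∑ c, y c • (((h:ℂ)⁻¹)^2 • G c (t, h))) +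
            (∑ c, z c • (((h:ℂ)⁻¹)^3 • G c (t, h)))
          = (∑ c, x' c • ((h:ℂ)⁻¹ • G c (t, h))) + (∑ c, y' c • (((h:ℂ)⁻¹)^2 • G c (t, h))) +
            (∑ c, z' c • (((h:ℂ)⁻¹)^3 • G c (t, h)))) →
      (∀ c, x c = x' c) ∧ (∀ c, y c = y' c) ∧ (∀ c, z c = z' c) := by
    intro t ht x y z x' y' z' hcond
    have hres := hLI t ht (x - x') (y - y') (z - z') ?_
    · refine ⟨fun c => ?_, fun c => ?_, fun c => ?_⟩
      · exact sub_eq_zero.mp (hres.1 c)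
      · exact sub_eq_zero.mp (hres.2.1 c)
      · exact sub_eq_zero.mp (hres.2.2 c)
    · intro h hh
      have e : ∀ c, pdt Ψ c t h = G c (t, h) := fun c => hpdt c ⟨ht, hh⟩
      simp only [e, Pi.sub_apply, sub_smul, Finset.sum_sub_distrib]
      rw [sub_add_sub_comm, sub_add_sub_comm]
      exact sub_eq_zero.mpr (hcond h hh)
  -- symmetry of the multiplication
  have hAsymm : ∀ (a b c : Fin N), ∀ t ∈ U, A c a b t = A c b a t := by
    intro a b c t ht
    refine ((hKey t ht (fun c => A c a b t) 0 0 (fun c => A c b a t) 0 0 ?_).1 c)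
    intro h hh
    have hp : ((t, h) : (Fin N → ℂ) × ℂ) ∈ s := ⟨ht, hh⟩
    have e1 := hPF' a b (t, h) hp
    have e2 := hPF' b a (t, h) hp
    have e3 : fderiv ℂ (G b) (t, h) (Pi.single a 1, (0:ℂ))
        = fderiv ℂ (G a) (t, h) (Pi.single b 1, (0:ℂ)) :=
      PFAux.dirD_comm hF hs hp _ _
    simp only [Pi.zero_apply, zero_smul, Finset.sum_const_zero, add_zero]
    calc ∑ c, A c a b t • ((h:ℂ)⁻¹ • G c (t, h))
        = (h:ℂ)⁻¹ • ∑ c, A c a b t • G c (t, h) := (PFAux2.swap_smul _ _ _).symm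
      _ = fderiv ℂ (G b) (t, h) (Pi.single a 1, (0:ℂ)) := e1.symm
      _ = fderiv ℂ (G a) (t, h) (Pi.single b 1, (0:ℂ)) := e3
      _ = (h:ℂ)⁻¹ • ∑ c, A c b a t • G c (t, h) := e2
      _ = ∑ c, A c b a t • ((h:ℂ)⁻¹ • G c (t, h)) := PFAux2.swap_smul _ _ _
  -- spatial derivative of a PF-type expression (inverse weight)
  have hDoubleA : ∀ (f : Fin N → (Fin N → ℂ) → ℂ) (e : Fin N) (p : (Fin N → ℂ) × ℂ), p ∈ s →
      (∀ c, DifferentiableAt ℂ (f c) p.1) →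
      fderiv ℂ (fun q : (Fin N → ℂ) × ℂ => (q.2)⁻¹ • ∑ c, f c q.1 • G c q) p
          (Pi.single e 1, (0:ℂ))
        = (∑ c, (fderiv ℂ (f c) p.1 (Pi.single e 1)) • ((p.2)⁻¹ • G c p))
          + ∑ d, (∑ c, f c p.1 * A d e c p.1) • (((p.2)⁻¹)^2 • G d p) := by
    intro f e p hp hf
    have h0 : p.2 ≠ 0 := fun h0 => hV0 (h0 ▸ hp.2)
    have hinv : HasDerivAt (fun x : ℂ => x⁻¹) (-(p.2 ^ 2)⁻¹) p.2 := hasDerivAt_inv h0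
    have hcd := PFAux2.comp_dirD (φ := fun x : ℂ => x⁻¹) (φ' := -(p.2 ^ 2)⁻¹)
      (f := fun c q => f c q.1) (g := G) (p := p) hinv
      (fun c => PFAux2.fst_comp_diff (hf c)) (fun c => hGd c hp) (Pi.single e 1, (0:ℂ))
    rw [hcd]
    have e1 : ∀ c, fderiv ℂ (fun q : (Fin N → ℂ) × ℂ => f c q.1) p (Pi.single e 1, (0:ℂ))
        = fderiv ℂ (f c) p.1 (Pi.single e 1) := fun c => PFAux2.fst_dirD (hf c) _
    have e2 : ∀ c, fderiv ℂ (G c) p (Pi.single e 1, (0:ℂ))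
        = (p.2)⁻¹ • ∑ d, A d e c p.1 • G d p := fun c => hPF' e c p hp
    have stepA : (∑ c, (fderiv ℂ (fun q : (Fin N → ℂ) × ℂ => f c q.1) p (Pi.single e 1, (0:ℂ)) • G c p
        + f c p.1 • fderiv ℂ (G c) p (Pi.single e 1, (0:ℂ))))
        = ∑ c, (fderiv ℂ (f c) p.1 (Pi.single e 1) • G c p
          + f c p.1 • ((p.2)⁻¹ • ∑ d, A d e c p.1 • G d p)) :=
      Finset.sum_congr rfl fun c _ => by rw [e1 c, e2 c]
    rw [stepA]
    simp only [mul_zero, zero_smul, zero_add]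
    rw [Finset.sum_add_distrib, smul_add, PFAux2.nest, PFAux2.swap_smul,
      show p.2⁻¹ * p.2⁻¹ = (p.2⁻¹)^2 from (pow_two _).symm]
  -- spatial derivative of a PF-type expression (inverse-square weight)
  have hDoubleB : ∀ (f : Fin N → (Fin N → ℂ) → ℂ) (e : Fin N) (p : (Fin N → ℂ) × ℂ), p ∈ s →
      (∀ c, DifferentiableAt ℂ (f c) p.1) →
      fderiv ℂ (fun q : (Fin N → ℂ) × ℂ => ((q.2)⁻¹)^2 • ∑ c, f c q.1 • G c q) p
          (Pi.single e 1, (0:ℂ))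
        = (∑ c, (fderiv ℂ (f c) p.1 (Pi.single e 1)) • (((p.2)⁻¹)^2 • G c p))
          + ∑ d, (∑ c, f c p.1 * A d e c p.1) • (((p.2)⁻¹)^3 • G d p) := by
    intro f e p hp hf
    have h0 : p.2 ≠ 0 := fun h0 => hV0 (h0 ▸ hp.2)
    have hinv : HasDerivAt (fun x : ℂ => (x⁻¹)^2)
        ((2:ℕ) * (p.2⁻¹) ^ (2 - 1) * -(p.2 ^ 2)⁻¹) p.2 := (hasDerivAt_inv h0).pow 2
    have hcd := PFAux2.comp_dirD (φ := fun x : ℂ => (x⁻¹)^2)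
      (φ' := (2:ℕ) * (p.2⁻¹) ^ (2 - 1) * -(p.2 ^ 2)⁻¹)
      (f := fun c q => f c q.1) (g := G) (p := p) hinv
      (fun c => PFAux2.fst_comp_diff (hf c)) (fun c => hGd c hp) (Pi.single e 1, (0:ℂ))
    rw [hcd]
    have e1 : ∀ c, fderiv ℂ (fun q : (Fin N → ℂ) × ℂ => f c q.1) p (Pi.single e 1, (0:ℂ))
        = fderiv ℂ (f c) p.1 (Pi.single e 1) := fun c => PFAux2.fst_dirD (hf c) _
    have e2 : ∀ c, fderiv ℂ (G c) p (Pi.single e 1, (0:ℂ))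
        = (p.2)⁻¹ • ∑ d, A d e c p.1 • G d p := fun c => hPF' e c p hp
    have stepA : (∑ c, (fderiv ℂ (fun q : (Fin N → ℂ) × ℂ => f c q.1) p (Pi.single e 1, (0:ℂ)) • G c p
        + f c p.1 • fderiv ℂ (G c) p (Pi.single e 1, (0:ℂ))))
        = ∑ c, (fderiv ℂ (f c) p.1 (Pi.single e 1) • G c p
          + f c p.1 • ((p.2)⁻¹ • ∑ d, A d e c p.1 • G d p)) :=
      Finset.sum_congr rfl fun c _ => by rw [e1 c, e2 c]
    rw [stepA]
    simp only [mul_zero, zero_smul, zero_add]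
    rw [Finset.sum_add_distrib, smul_add, PFAux2.nest, PFAux2.swap_smul,
      show (p.2⁻¹)^2 * p.2⁻¹ = (p.2⁻¹)^3 from by ring]
  -- h-derivative of a PF-type expression
  have hEhD : ∀ (f : Fin N → (Fin N → ℂ) → ℂ) (p : (Fin N → ℂ) × ℂ), p ∈ s →
      (∀ c, DifferentiableAt ℂ (f c) p.1) →
      fderiv ℂ (fun q : (Fin N → ℂ) × ℂ => (q.2)⁻¹ • ∑ c, f c q.1 • G c q) p ((0:Fin N → ℂ), (1:ℂ))
        = (-((p.2)^2)⁻¹) • (∑ c, f c p.1 • G c p) + (p.2)⁻¹ • ∑ c, f c p.1 • P c p := by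
    intro f p hp hf
    have h0 : p.2 ≠ 0 := fun h0 => hV0 (h0 ▸ hp.2)
    have hinv : HasDerivAt (fun x : ℂ => x⁻¹) (-(p.2 ^ 2)⁻¹) p.2 := hasDerivAt_inv h0
    have hcd := PFAux2.comp_dirD (φ := fun x : ℂ => x⁻¹) (φ' := -(p.2 ^ 2)⁻¹)
      (f := fun c q => f c q.1) (g := G) (p := p) hinv
      (fun c => PFAux2.fst_comp_diff (hf c)) (fun c => hGd c hp) ((0:Fin N → ℂ), (1:ℂ))
    rw [hcd]
    have e1 : ∀ c, fderiv ℂ (fun q : (Fin N → ℂ) × ℂ => f c q.1) p ((0:Fin N → ℂ), (1:ℂ))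
        = 0 := by
      intro c
      rw [PFAux2.fst_dirD (hf c)]
      exact (fderiv ℂ (f c) p.1).map_zero
    simp only [e1, zero_smul, zero_add, mul_one]
    rfl
  -- flatness: derivatives of A commute appropriately
  have hflat : ∀ (e a b c : Fin N), ∀ t ∈ U,
      fderiv ℂ (A c a b) t (Pi.single e 1) = fderiv ℂ (A c e b) t (Pi.single a 1) := by
    intro e a b c t ht
    refine ((hKey t ht (fun c' => fderiv ℂ (A c' a b) t (Pi.single e 1))
      (fun d => ∑ c', A c' a b t * A d e c' t) 0
      (fun c' => fderiv ℂ (A c' e b) t (Pi.single a 1))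
      (fun d => ∑ c', A c' e b t * A d a c' t) 0 ?_).1 c)
    intro h hh
    have hp : ((t, h) : (Fin N → ℂ) × ℂ) ∈ s := ⟨ht, hh⟩
    have inst : ∀ u v : Fin N,
        fderiv ℂ (fun q : (Fin N → ℂ) × ℂ => fderiv ℂ (G b) q (Pi.single v 1, (0:ℂ))) (t, h)
          (Pi.single u 1, (0:ℂ))
        = (∑ c', (fderiv ℂ (A c' v b) t (Pi.single u 1)) • ((h:ℂ)⁻¹ • G c' (t, h)))
          + ∑ d, (∑ c', A c' v b t * A d u c' t) • (((h:ℂ)⁻¹)^2 • G d (t, h)) := by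
      intro u v
      have hfe : (fun q : (Fin N → ℂ) × ℂ => fderiv ℂ (G b) q (Pi.single v 1, (0:ℂ)))
          =ᶠ[nhds ((t, h) : (Fin N → ℂ) × ℂ)]
            (fun q => (q.2)⁻¹ • ∑ c', A c' v b q.1 • G c' q) := by
        filter_upwards [hs.mem_nhds hp] with q hq using hPF' v b q hq
      rw [hfe.fderiv_eq]
      exact hDoubleA (fun c' => A c' v b) u (t, h) hp (fun c' => hAd c' v b ht)
    have comm := PFAux.dirD_comm (hGsm b) hs hp (Pi.single e 1, (0:ℂ)) (Pi.single a 1, (0:ℂ))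
    simp only [Pi.zero_apply, zero_smul, Finset.sum_const_zero, add_zero]
    exact (inst e a).symm.trans (comm.trans (inst a e))
  -- the y coefficients
  set y : Fin N → Fin N → (Fin N → ℂ) → ℂ := fun a d t => ∑ c, E c t * A d a c t with hydef
  have hyd : ∀ (a d) {t}, t ∈ U → DifferentiableAt ℂ (y a d) t := by
    intro a d t ht
    exact DifferentiableAt.fun_sum fun c _ => (hEd c ht).mul (hAd d a c ht)
  -- the master identity for P
  have hP : ∀ (a : Fin N), ∀ p ∈ s,
      P a p = (p.2)⁻¹ • (∑ c, fderiv ℂ (E c) p.1 (Pi.single a 1) • G c p)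
        + ((p.2)⁻¹)^2 • (∑ c, y a c p.1 • G c p) := by
    rintro a ⟨t, h⟩ hp
    have ht : t ∈ U := hp.1
    have comm := PFAux.dirD_comm hF hs hp ((0 : Fin N → ℂ), (1:ℂ)) (Pi.single a 1, (0:ℂ))
    have hfe : Gh =ᶠ[nhds ((t, h) : (Fin N → ℂ) × ℂ)]
        (fun q => (q.2)⁻¹ • ∑ c, E c q.1 • G c q) := by
      filter_upwards [hs.mem_nhds hp] with q hq using hEU' q hq
    have h2 : fderiv ℂ Gh (t, h)
        = fderiv ℂ (fun q : (Fin N → ℂ) × ℂ => (q.2)⁻¹ • ∑ c, E c q.1 • G c q) (t, h) :=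
      hfe.fderiv_eq
    calc P a (t, h)
        = fderiv ℂ (fun q : (Fin N → ℂ) × ℂ => fderiv ℂ F q (Pi.single a 1, (0:ℂ))) (t, h)
          ((0 : Fin N → ℂ), (1:ℂ)) := rfl
      _ = fderiv ℂ Gh (t, h) (Pi.single a 1, (0:ℂ)) := by rw [comm]
      _ = fderiv ℂ (fun q : (Fin N → ℂ) × ℂ => (q.2)⁻¹ • ∑ c, E c q.1 • G c q) (t, h)
          (Pi.single a 1, (0:ℂ)) := by rw [h2]
      _ = (∑ c, (fderiv ℂ (E c) t (Pi.single a 1)) • ((h:ℂ)⁻¹ • G c (t, h)))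
          + ∑ d, (∑ c, E c t * A d a c t) • (((h:ℂ)⁻¹)^2 • G d (t, h)) :=
        hDoubleA E a (t, h) hp (fun c => hEd c ht)
      _ = (h:ℂ)⁻¹ • (∑ c, fderiv ℂ (E c) t (Pi.single a 1) • G c (t, h))
          + ((h:ℂ)⁻¹)^2 • (∑ c, y a c t • G c (t, h)) := by
        rw [PFAux2.swap_smul, PFAux2.swap_smul]
  -- differentiability of the first derivatives of E (Cramer upgrade)
  have hdEd : ∀ (a c : Fin N), ∀ t ∈ U,
      DifferentiableAt ℂ (fun t' => fderiv ℂ (E c) t' (Pi.single a 1)) t := by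
    have hslice : ∀ (g : (Fin N → ℂ) × ℂ → Fin M → ℂ), ContDiffOn ℂ ⊤ g s →
        ∀ (h : ℂ), h ∈ V → ∀ (m : Fin M), ∀ t ∈ U,
          DifferentiableAt ℂ (fun t' => g (t', h) m) t := by
      intro g hg h hh m t htU
      have hp : ((t, h) : (Fin N → ℂ) × ℂ) ∈ s := ⟨htU, hh⟩
      have hgd : DifferentiableAt ℂ g (t, h) :=
        (hg.contDiffAt (hs.mem_nhds hp)).differentiableAt (by simp)
      have hcomp : DifferentiableAt ℂ (fun t' => g (t', h)) t :=
        hgd.comp t (differentiableAt_id.prodMk (differentiableAt_const h))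
      have hm : DifferentiableAt ℂ (fun v : Fin M → ℂ => v m) (g (t, h)) :=
        (ContinuousLinearMap.proj (R := ℂ) (φ := fun _ : Fin M => ℂ) m).differentiableAt
      exact hm.comp t hcomp
    intro a c₀ t₀ ht₀
    set w : (Fin N ⊕ Fin N) → ({h : ℂ // h ∈ V} × Fin M) → ℂ := fun k q =>
      Sum.elim (fun c => (((q.1 : ℂ))⁻¹ • G c (t₀, (q.1 : ℂ))) q.2)
               (fun c => ((((q.1 : ℂ))⁻¹)^2 • G c (t₀, (q.1 : ℂ))) q.2) k with hwdef
    have hwli : LinearIndependent ℂ w := by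
      rw [Fintype.linearIndependent_iff]
      intro g hg
      have hres := hKey t₀ ht₀ (fun c => g (Sum.inl c)) (fun c => g (Sum.inr c)) 0 0 0 0 ?_
      · rintro (c | c)
        exacts [hres.1 c, hres.2.1 c]
      · intro h hh
        simp only [Pi.zero_apply, zero_smul, Finset.sum_const_zero, add_zero]
        have h1 := congrFun hg
        funext m
        have h2 := h1 (⟨⟨h, hh⟩, m⟩ : {h : ℂ // h ∈ V} × Fin M)
        simp only [Finset.sum_apply, Pi.zero_apply] at h2 ⊢
        rw [← h2, Fintype.sum_sum_type]
        simp [hwdef]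
    obtain ⟨bp, hbp⟩ := PFAux3.exists_eval_matrix w hwli
    set Bm : (Fin N → ℂ) → Matrix (Fin N ⊕ Fin N) (Fin N ⊕ Fin N) ℂ := fun t =>
      Matrix.of fun i j => Sum.elim
        (fun c => ((((bp i).1 : ℂ))⁻¹ • G c (t, ((bp i).1 : ℂ))) (bp i).2)
        (fun c => (((((bp i).1 : ℂ))⁻¹)^2 • G c (t, ((bp i).1 : ℂ))) (bp i).2) j with hBmdef
    set qv : (Fin N → ℂ) → (Fin N ⊕ Fin N) → ℂ :=
      fun t i => P a (t, ((bp i).1 : ℂ)) ((bp i).2) with hqvdef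
    set uv : (Fin N → ℂ) → (Fin N ⊕ Fin N) → ℂ := fun t =>
      Sum.elim (fun c => fderiv ℂ (E c) t (Pi.single a 1)) (fun c => y a c t) with huvdef
    have heq : ∀ᶠ t in nhds t₀, (Bm t).mulVec (uv t) = qv t := by
      filter_upwards [hU.mem_nhds ht₀] with t htU
      funext i
      have hp : ((t, ((bp i).1 : ℂ)) : (Fin N → ℂ) × ℂ) ∈ s := ⟨htU, (bp i).1.2⟩
      have hPc := congrFun (hP a (t, ((bp i).1 : ℂ)) hp) ((bp i).2)
      show ∑ j, Bm t i j * uv t j = P a (t, ((bp i).1 : ℂ)) ((bp i).2)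
      rw [hPc, Fintype.sum_sum_type]
      simp only [hBmdef, huvdef, Matrix.of_apply, Sum.elim_inl, Sum.elim_inr,
        Pi.add_apply, Pi.smul_apply, smul_eq_mul, Finset.sum_apply, Finset.mul_sum]
      congr 1
      · exact Finset.sum_congr rfl fun c _ => by ring
      · exact Finset.sum_congr rfl fun c _ => by ring
    have hBd : ∀ i j, DifferentiableAt ℂ (fun t => Bm t i j) t₀ := by
      rintro i (c | c)
      · exact ((hslice (G c) (hGsm c) _ (bp i).1.2 (bp i).2 t₀ ht₀).const_mul _ : _)
      · exact ((hslice (G c) (hGsm c) _ (bp i).1.2 (bp i).2 t₀ ht₀).const_mul _ : _)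
    have hqd : ∀ i, DifferentiableAt ℂ (fun t => qv t i) t₀ := fun i =>
      hslice (P a) (hPsm a) _ (bp i).1.2 (bp i).2 t₀ ht₀
    have hdetc : ContinuousAt (fun t => (Bm t).det) t₀ :=
      (PFAux4.det_diff hBd).continuousAt
    have hdet0 : (Bm t₀).det ≠ 0 := by
      have hBm0 : Bm t₀ = Matrix.of fun i j => w j (bp i) := rfl
      rw [hBm0]
      exact hbp.ne_zero
    have hsol := PFAux4.solve_diff hBd hqd hdetc hdet0 heq (Sum.inl c₀)
    exact hsol
  -- the two main coefficient identities
  have hMain : ∀ (a b : Fin N), ∀ t ∈ U,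
      (∀ c, fderiv ℂ (fun t' => fderiv ℂ (E c) t' (Pi.single a 1)) t (Pi.single b 1) = 0) ∧
      (∀ d, (∑ c, fderiv ℂ (E c) t (Pi.single a 1) * A d b c t)
            + fderiv ℂ (y a d) t (Pi.single b 1)
          = -(A d b a t) + ∑ c, A c b a t * fderiv ℂ (E d) t (Pi.single c 1)) := by
    intro a b t ht
    have hres := hKey t ht
      (fun c => fderiv ℂ (fun t' => fderiv ℂ (E c) t' (Pi.single a 1)) t (Pi.single b 1))
      (fun d => (∑ c, fderiv ℂ (E c) t (Pi.single a 1) * A d b c t)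
        + fderiv ℂ (y a d) t (Pi.single b 1))
      (fun d => ∑ c, y a c t * A d b c t)
      (fun _ => (0:ℂ))
      (fun d => -(A d b a t) + ∑ c, A c b a t * fderiv ℂ (E d) t (Pi.single c 1))
      (fun d => ∑ c, A c b a t * y c d t)
      ?_
    · exact ⟨fun c => (hres.1 c).trans rfl, fun d => hres.2.1 d⟩
    intro h hh
    have hp : ((t, h) : (Fin N → ℂ) × ℂ) ∈ s := ⟨ht, hh⟩
    have h0 : (h:ℂ) ≠ 0 := fun hz => hV0 (hz ▸ hh)
    have hneg : ∀ (κ : ℂ) (f : Fin N → ℂ) (w : Fin N → Fin M → ℂ),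
        (-κ) • ∑ c, f c • w c = ∑ c, (-(f c)) • (κ • w c) := by
      intro κ f w
      rw [neg_smul, PFAux2.swap_smul, ← Finset.sum_neg_distrib]
      exact Finset.sum_congr rfl fun c _ => (neg_smul _ _).symm
    -- Way 1
    have hPfe : (P a) =ᶠ[nhds ((t, h) : (Fin N → ℂ) × ℂ)]
        (fun q => (q.2)⁻¹ • (∑ c, fderiv ℂ (E c) q.1 (Pi.single a 1) • G c q)
          + ((q.2)⁻¹)^2 • (∑ c, y a c q.1 • G c q)) := by
      filter_upwards [hs.mem_nhds hp] with q hq using hP a q hq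
    have hd1 : DifferentiableAt ℂ (fun q : (Fin N → ℂ) × ℂ =>
        (q.2)⁻¹ • (∑ c, fderiv ℂ (E c) q.1 (Pi.single a 1) • G c q)) (t, h) :=
      PFAux2.comp_diff (hasDerivAt_inv h0)
        (fun c => PFAux2.fst_comp_diff (φ := fun t' => fderiv ℂ (E c) t' (Pi.single a 1)) (hdEd a c t ht)) (fun c => hGd c hp)
    have hd2 : DifferentiableAt ℂ (fun q : (Fin N → ℂ) × ℂ =>
        ((q.2)⁻¹)^2 • (∑ c, y a c q.1 • G c q)) (t, h) :=
      PFAux2.comp_diff ((hasDerivAt_inv h0).pow 2)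
        (fun c => PFAux2.fst_comp_diff (hyd a c ht)) (fun c => hGd c hp)
    have hW1 : fderiv ℂ (P a) (t, h) (Pi.single b 1, (0:ℂ))
        = (∑ c, (fderiv ℂ (fun t' => fderiv ℂ (E c) t' (Pi.single a 1)) t (Pi.single b 1))
            • ((h:ℂ)⁻¹ • G c (t, h)))
          + ((∑ d, (∑ c, fderiv ℂ (E c) t (Pi.single a 1) * A d b c t)
              • (((h:ℂ)⁻¹)^2 • G d (t, h)))
            + (∑ c, (fderiv ℂ (y a c) t (Pi.single b 1)) • (((h:ℂ)⁻¹)^2 • G c (t, h))))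
          + ∑ d, (∑ c, y a c t * A d b c t) • (((h:ℂ)⁻¹)^3 • G d (t, h)) := by
      rw [hPfe.fderiv_eq, fderiv_fun_add hd1 hd2, ContinuousLinearMap.add_apply,
        hDoubleA (fun c t' => fderiv ℂ (E c) t' (Pi.single a 1)) b (t, h) hp
          (fun c => hdEd a c t ht),
        hDoubleB (y a) b (t, h) hp (fun c => hyd a c ht)]
      abel
    -- Way 2
    have hcomm := PFAux.dirD_comm (hGsm a) hs hp (Pi.single b 1, (0:ℂ)) ((0:Fin N → ℂ), (1:ℂ))
    have hfe2 : (fun q : (Fin N → ℂ) × ℂ => fderiv ℂ (G a) q (Pi.single b 1, (0:ℂ)))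
        =ᶠ[nhds ((t, h) : (Fin N → ℂ) × ℂ)]
          (fun q => (q.2)⁻¹ • ∑ c, A c b a q.1 • G c q) := by
      filter_upwards [hs.mem_nhds hp] with q hq using hPF' b a q hq
    have hW2 : fderiv ℂ (P a) (t, h) (Pi.single b 1, (0:ℂ))
        = (∑ c, (0:ℂ) • ((h:ℂ)⁻¹ • G c (t, h)))
          + ((∑ c, (-(A c b a t)) • (((h:ℂ)⁻¹)^2 • G c (t, h)))
            + ∑ d, (∑ c, A c b a t * fderiv ℂ (E d) t (Pi.single c 1))
              • (((h:ℂ)⁻¹)^2 • G d (t, h)))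
          + ∑ d, (∑ c, A c b a t * y c d t) • (((h:ℂ)⁻¹)^3 • G d (t, h)) := by
      have e0 : fderiv ℂ (P a) (t, h) (Pi.single b 1, (0:ℂ))
          = fderiv ℂ (fun q : (Fin N → ℂ) × ℂ => fderiv ℂ (G a) q (Pi.single b 1, (0:ℂ)))
            (t, h) ((0:Fin N → ℂ), (1:ℂ)) := hcomm
      rw [e0, hfe2.fderiv_eq, hEhD (fun c => A c b a) (t, h) hp (fun c => hAd c b a ht)]
      have eP : (∑ c, A c b a t • P c (t, h))
          = (∑ c, A c b a t • ((h:ℂ)⁻¹ • (∑ d, fderiv ℂ (E d) t (Pi.single c 1) • G d (t, h))))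
            + ∑ c, A c b a t • (((h:ℂ)⁻¹)^2 • (∑ d, y c d t • G d (t, h))) := by
        rw [← Finset.sum_add_distrib]
        refine Finset.sum_congr rfl fun c _ => ?_
        rw [← smul_add, hP c (t, h) hp]
      rw [eP, smul_add, PFAux2.nest, PFAux2.nest,
        show (h:ℂ)⁻¹ * (h:ℂ)⁻¹ = ((h:ℂ)⁻¹)^2 from (pow_two _).symm,
        show (h:ℂ)⁻¹ * ((h:ℂ)⁻¹)^2 = ((h:ℂ)⁻¹)^3 from by ring,
        show (-((h:ℂ)^2)⁻¹ : ℂ) = -(((h:ℂ)⁻¹)^2) from by rw [inv_pow],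
        hneg]
      simp only [zero_smul, Finset.sum_const_zero, zero_add]
      abel
    -- combine
    have split1 : (∑ d, ((∑ c, fderiv ℂ (E c) t (Pi.single a 1) * A d b c t)
          + fderiv ℂ (y a d) t (Pi.single b 1)) • (((h:ℂ)⁻¹)^2 • G d (t, h)))
        = (∑ d, (∑ c, fderiv ℂ (E c) t (Pi.single a 1) * A d b c t)
            • (((h:ℂ)⁻¹)^2 • G d (t, h)))
          + ∑ c, (fderiv ℂ (y a c) t (Pi.single b 1)) • (((h:ℂ)⁻¹)^2 • G c (t, h)) := by
      rw [← Finset.sum_add_distrib]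
      exact Finset.sum_congr rfl fun d _ => add_smul _ _ _
    have split2 : (∑ d, (-(A d b a t)
          + ∑ c, A c b a t * fderiv ℂ (E d) t (Pi.single c 1)) • (((h:ℂ)⁻¹)^2 • G d (t, h)))
        = (∑ c, (-(A c b a t)) • (((h:ℂ)⁻¹)^2 • G c (t, h)))
          + ∑ d, (∑ c, A c b a t * fderiv ℂ (E d) t (Pi.single c 1))
            • (((h:ℂ)⁻¹)^2 • G d (t, h)) := by
      rw [← Finset.sum_add_distrib]
      exact Finset.sum_congr rfl fun d _ => add_smul _ _ _
    rw [split1, split2, ← hW1, ← hW2]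
  -- conclusions
  intro t ht
  constructor
  · -- (i) E is affine
    intro a b c
    have hupd : Continuous (fun z : ℂ => Function.update t a z) := by
      apply continuous_pi
      intro i
      rcases eq_or_ne i a with rfl | hi
      · simpa [Function.update_apply] using continuous_id'
      · simpa [Function.update_apply, hi] using continuous_const
    have hopen : IsOpen {z : ℂ | Function.update t a z ∈ U} := hU.preimage hupd
    have hmem0 : t a ∈ {z : ℂ | Function.update t a z ∈ U} := by
      simp only [Set.mem_setOf_eq, Function.update_eq_self]
      exact ht
    have hEV : (fun z : ℂ => pdS b (E c) (Function.update t a z)) =ᶠ[nhds (t a)]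
        (fun z : ℂ => fderiv ℂ (E c) (Function.update t a z) (Pi.single b 1)) := by
      filter_upwards [hopen.mem_nhds hmem0] with z hz
      exact PFAux.pdS_eq (hEd c hz) b
    have h1 : pdS a (fun s => pdS b (E c) s) t
        = deriv (fun z : ℂ => fderiv ℂ (E c) (Function.update t a z) (Pi.single b 1)) (t a) :=
      hEV.deriv_eq
    have h2 := PFAux.pdS_eq (φ := fun t' => fderiv ℂ (E c) t' (Pi.single b 1))
      (hdEd b c t ht) a
    rw [h1]
    rw [show deriv (fun z : ℂ => fderiv ℂ (E c) (Function.update t a z) (Pi.single b 1)) (t a)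
      = pdS a (fun t' => fderiv ℂ (E c) t' (Pi.single b 1)) t from rfl, h2]
    exact (hMain b a t ht).1 c
  · -- (ii) conformal symmetry
    intro a b cc
    have hsymfun : ∀ u v : Fin N, fderiv ℂ (A cc u v) t = fderiv ℂ (A cc v u) t := by
      intro u v
      apply Filter.EventuallyEq.fderiv_eq
      filter_upwards [hU.mem_nhds ht] with x hx using hAsymm u v cc x hx
    have eflat : ∀ c : Fin N,
        fderiv ℂ (A cc a c) t (Pi.single b 1) = fderiv ℂ (A cc a b) t (Pi.single c 1) := by
      intro c
      rw [hsymfun a c]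
      rw [hflat b c a cc t ht]
      rw [hsymfun b a]
    have hbeta := (hMain a b t ht).2 cc
    have hyder : fderiv ℂ (y a cc) t (Pi.single b 1)
        = ∑ c, (E c t * fderiv ℂ (A cc a c) t (Pi.single b 1)
            + A cc a c t * fderiv ℂ (E c) t (Pi.single b 1)) := by
      have hs1 : HasFDerivAt (y a cc)
          (∑ c, (E c t • fderiv ℂ (A cc a c) t + A cc a c t • fderiv ℂ (E c) t)) t :=
        HasFDerivAt.fun_sum fun c _ => ((hEd c ht).hasFDerivAt.mul (hAd cc a c ht).hasFDerivAt)
      rw [hs1.fderiv]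
      simp [ContinuousLinearMap.sum_apply, smul_eq_mul]
    rw [hyder] at hbeta
    -- bridge pdS to fderiv in the goal
    have g1 : (∑ e', E e' t * pdS e' (A cc a b) t)
        = ∑ e', E e' t * fderiv ℂ (A cc a b) t (Pi.single e' 1) :=
      Finset.sum_congr rfl fun e' _ => by rw [PFAux.pdS_eq (hAd cc a b ht) e']
    have g2 : (∑ e', pdS a (E e') t * A cc e' b t)
        = ∑ e', fderiv ℂ (E e') t (Pi.single a 1) * A cc e' b t :=
      Finset.sum_congr rfl fun e' _ => by rw [PFAux.pdS_eq (hEd e' ht) a]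
    have g3 : (∑ e', pdS b (E e') t * A cc a e' t)
        = ∑ e', fderiv ℂ (E e') t (Pi.single b 1) * A cc a e' t :=
      Finset.sum_congr rfl fun e' _ => by rw [PFAux.pdS_eq (hEd e' ht) b]
    have g4 : (∑ e', A e' a b t * pdS e' (E cc) t)
        = ∑ e', A e' a b t * fderiv ℂ (E cc) t (Pi.single e' 1) :=
      Finset.sum_congr rfl fun e' _ => by rw [PFAux.pdS_eq (hEd cc ht) e']
    rw [g1, g2, g3, g4]
    -- rewrite hbeta into matching sums
    rw [Finset.sum_add_distrib] at hbeta
    have m1 : (∑ c, E c t * fderiv ℂ (A cc a c) t (Pi.single b 1))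
        = ∑ e', E e' t * fderiv ℂ (A cc a b) t (Pi.single e' 1) :=
      Finset.sum_congr rfl fun c _ => by rw [eflat c]
    have m2 : (∑ c, fderiv ℂ (E c) t (Pi.single a 1) * A cc b c t)
        = ∑ e', fderiv ℂ (E e') t (Pi.single a 1) * A cc e' b t :=
      Finset.sum_congr rfl fun c _ => by rw [hAsymm b c cc t ht]
    have m3 : (∑ c, A cc a c t * fderiv ℂ (E c) t (Pi.single b 1))
        = ∑ e', fderiv ℂ (E e') t (Pi.single b 1) * A cc a e' t :=
      Finset.sum_congr rfl fun c _ => mul_comm _ _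
    have m4 : (∑ c, A c b a t * fderiv ℂ (E cc) t (Pi.single c 1))
        = ∑ e', A e' a b t * fderiv ℂ (E cc) t (Pi.single e' 1) :=
      Finset.sum_congr rfl fun c _ => by rw [hAsymm b a c t ht]
    rw [m1, m2, m3, m4, hAsymm b a cc t ht] at hbeta
    linear_combination hbeta
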